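/- For every n ≥ 1, the composite GW(F) → K^MW_0(F) → K^MW_{-n}(F) (where the second map is multiplication by ηⁿ) factors through the Witt ring W(F) = GW(F)/(h), and the induced map φ_{-n} : W(F) → K^MW_{-n}(F) is an isomorphism of abelian groups; moreover φ₀ : GW(F) → K^MW_0(F) is an isomorphism. -/

import Mathlib

noncomputable section

/-- Generators of the Milnor–Witt K-theory ring: a symbol `[u]` for each unit `u`
and the element `η`. -/
inductive MWGen (F : Type) [Field F] : Type
  | of : Fˣ → MWGen F
  | eta : MWGen F

/-- The defining relations KMW1–KMW4 of Milnor–Witt K-theory, imposed on the free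
(noncommutative) ℤ-algebra on the generators. -/
inductive MWRel (F : Type) [Field F] :
    FreeAlgebra ℤ (MWGen F) → FreeAlgebra ℤ (MWGen F) → Prop
  | steinberg (a : Fˣ) (h1 : (a : F) ≠ 1) :
      MWRel F
        (FreeAlgebra.ι ℤ (MWGen.of a) *
          FreeAlgebra.ι ℤ (MWGen.of (Units.mk0 (1 - (a : F)) (sub_ne_zero_of_ne h1.symm))))
        0
  | mul_rel (a b : Fˣ) :
      MWRel F (FreeAlgebra.ι ℤ (MWGen.of (a * b)))
        (FreeAlgebra.ι ℤ (MWGen.of a) + FreeAlgebra.ι ℤ (MWGen.of b) +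
          FreeAlgebra.ι ℤ MWGen.eta * FreeAlgebra.ι ℤ (MWGen.of a) *
            FreeAlgebra.ι ℤ (MWGen.of b))
  | comm_rel (u : Fˣ) :
      MWRel F (FreeAlgebra.ι ℤ MWGen.eta * FreeAlgebra.ι ℤ (MWGen.of u))
        (FreeAlgebra.ι ℤ (MWGen.of u) * FreeAlgebra.ι ℤ MWGen.eta)
  | hyp :
      MWRel F
        (FreeAlgebra.ι ℤ MWGen.eta *
          (FreeAlgebra.ι ℤ MWGen.eta * FreeAlgebra.ι ℤ (MWGen.of (-1)) + 2))
        0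

/-- The Milnor–Witt K-theory ring `K^MW_*(F)` (all degrees together). -/
def KMW (F : Type) [Field F] : Type := RingQuot (MWRel F)

instance (F : Type) [Field F] : Ring (KMW F) := inferInstanceAs (Ring (RingQuot (MWRel F)))

/-- The symbol `[u] ∈ K^MW_1(F)`. -/
def mw {F : Type} [Field F] (u : Fˣ) : KMW F :=
  RingQuot.mkRingHom (MWRel F) (FreeAlgebra.ι ℤ (MWGen.of u))

/-- The element `η ∈ K^MW_{-1}(F)`. -/
def mweta (F : Type) [Field F] : KMW F :=
  RingQuot.mkRingHom (MWRel F) (FreeAlgebra.ι ℤ MWGen.eta)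

/-- The degree-`n` homogeneous component of `K^MW_*(F)`: the additive subgroup spanned
by the monomials `η^m [u₁]⋯[u_r]` with `r - m = n`. -/
def KMWcomp (F : Type) [Field F] (n : ℤ) : AddSubgroup (KMW F) :=
  AddSubgroup.closure {x | ∃ (m r : ℕ) (v : Fin r → Fˣ),
    (r : ℤ) - (m : ℤ) = n ∧ x = (mweta F) ^ m * (List.ofFn fun i => mw (v i)).prod}

/-- The defining relations of the Grothendieck–Witt ring `GW(F)`, presented as a
commutative ring with generators `⟨u⟩` for `u ∈ Fˣ`: the additive relations
GW1–GW3 together with multiplicativity of the symbols. -/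
inductive GWRel (F : Type) [Field F] :
    MvPolynomial Fˣ ℤ → MvPolynomial Fˣ ℤ → Prop
  | sq (u v : Fˣ) : GWRel F (MvPolynomial.X (u * v ^ 2)) (MvPolynomial.X u)
  | hyp (u : Fˣ) :
      GWRel F (MvPolynomial.X u + MvPolynomial.X (-u))
        (1 + MvPolynomial.X (-1 : Fˣ))
  | add (u v : Fˣ) (h : (u : F) + (v : F) ≠ 0) :
      GWRel F (MvPolynomial.X u + MvPolynomial.X v)
        (MvPolynomial.X (Units.mk0 ((u : F) + (v : F)) h) +
          MvPolynomial.X (Units.mk0 ((u : F) + (v : F)) h * u * v))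
  | mul (u v : Fˣ) :
      GWRel F (MvPolynomial.X u * MvPolynomial.X v) (MvPolynomial.X (u * v))
  | one : GWRel F (MvPolynomial.X (1 : Fˣ)) 1

/-- The Grothendieck–Witt ring `GW(F)` of the field `F`, via its presentation. -/
def GW (F : Type) [Field F] : Type := RingQuot (GWRel F)

instance (F : Type) [Field F] : CommRing (GW F) :=
  inferInstanceAs (CommRing (RingQuot (GWRel F)))

/-- The generator `⟨u⟩ ∈ GW(F)`. -/
def gw {F : Type} [Field F] (u : Fˣ) : GW F :=
  RingQuot.mkRingHom (GWRel F) (MvPolynomial.X u)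

/-- The hyperbolic element `h = 1 + ⟨-1⟩ ∈ GW(F)`. -/
def hGW (F : Type) [Field F] : GW F := 1 + gw (-1 : Fˣ)

/-- The Witt ring `W(F) := GW(F)/(h)`. -/
def WittRing (F : Type) [Field F] : Type := GW F ⧸ Ideal.span {hGW F}

instance (F : Type) [Field F] : CommRing (WittRing F) :=
  inferInstanceAs (CommRing (GW F ⧸ Ideal.span {hGW F}))

/-- The quotient map `GW(F) → W(F)`. -/
def wq (F : Type) [Field F] : GW F →+* WittRing F :=
  Ideal.Quotient.mk (Ideal.span {hGW F})

namespace Stmt13Aux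

variable {F : Type} [Field F]

/-! ### Basic relations in `KMW` -/

lemma mw_mul_rel (a b : Fˣ) :
    mw (a * b) = mw a + mw b + mweta F * mw a * mw b := by
  have h := RingQuot.mkRingHom_rel (MWRel.mul_rel (F := F) a b)
  simp only [map_add, map_mul] at h
  exact h

lemma eta_mw_comm (u : Fˣ) : mweta F * mw u = mw u * mweta F := by
  have h := RingQuot.mkRingHom_rel (MWRel.comm_rel (F := F) u)
  simp only [map_mul] at h
  exact h

lemma eta_hyp_rel : mweta F * (mweta F * mw (-1 : Fˣ) + 2) = 0 := by
  have h := RingQuot.mkRingHom_rel (MWRel.hyp (F := F))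
  simp only [map_add, map_mul, map_ofNat, map_zero] at h
  exact h

lemma mw_steinberg (a : Fˣ) (h1 : (a : F) ≠ 1) :
    mw a * mw (Units.mk0 (1 - (a : F)) (sub_ne_zero_of_ne h1.symm)) = 0 := by
  have h := RingQuot.mkRingHom_rel (MWRel.steinberg (F := F) a h1)
  simp only [map_mul, map_zero] at h
  exact h

lemma eta_comm (x : KMW F) : mweta F * x = x * mweta F := by
  obtain ⟨y, rfl⟩ := RingQuot.mkRingHom_surjective (MWRel F) x
  induction y using FreeAlgebra.induction with
  | grade0 r =>
    have h : (RingQuot.mkRingHom (MWRel F)) (algebraMap ℤ (FreeAlgebra ℤ (MWGen F)) r)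
        = ((r : ℤ) : KMW F) := by
      have : (algebraMap ℤ (FreeAlgebra ℤ (MWGen F)) r) = ((r : ℤ) : FreeAlgebra ℤ (MWGen F)) := by
        simp
      rw [this]
      exact map_intCast (RingQuot.mkRingHom (MWRel F)) r
    rw [h]
    exact (Int.cast_comm r (mweta F)).symm
  | grade1 g =>
    cases g with
    | of u => exact eta_mw_comm u
    | eta => rfl
  | mul a b ha hb =>
    erw [map_mul, ← mul_assoc, ha, mul_assoc, hb, mul_assoc]
  | add a b ha hb =>
    have e : (RingQuot.mkRingHom (MWRel F)) (a + b)
        = @HAdd.hAdd (KMW F) (KMW F) (KMW F) _ ((RingQuot.mkRingHom (MWRel F)) a)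
          ((RingQuot.mkRingHom (MWRel F)) b) :=
      map_add _ a b
    rw [e]
    exact (mul_add (mweta F) _ _).trans ((congrArg₂ (· + ·) ha hb).trans (add_mul _ _ (mweta F)).symm)

lemma commute_eta (x : KMW F) : Commute (mweta F) x := eta_comm x

lemma eta_sq_neg_one : mweta F * (mweta F * mw (-1 : Fˣ)) = -(2 * mweta F) := by
  have h := eta_hyp_rel (F := F)
  rw [mul_add] at h
  have := eq_neg_of_add_eq_zero_left h
  rw [this]; noncomm_ring

/-- `η ⋅ [1] = 0`. -/
lemma eta_mw_one : mweta F * mw (1 : Fˣ) = 0 := by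
  have h1 : mw ((-1 : Fˣ) * (-1)) =
      mw (-1 : Fˣ) + mw (-1) + mweta F * mw (-1) * mw (-1) := mw_mul_rel _ _
  rw [show ((-1 : Fˣ) * (-1)) = 1 by norm_num] at h1
  calc mweta F * mw (1 : Fˣ)
      = mweta F * mw (-1 : Fˣ) + mweta F * mw (-1) +
        (mweta F * (mweta F * mw (-1))) * mw (-1) := by rw [h1]; noncomm_ring
    _ = 0 := by rw [eta_sq_neg_one]; noncomm_ring

/-- `[1] = 0`. -/
lemma mw_one : mw (1 : Fˣ) = 0 := by
  have h1 : mw ((1 : Fˣ) * 1) = mw (1 : Fˣ) + mw 1 + mweta F * mw 1 * mw 1 := mw_mul_rel _ _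
  rw [one_mul] at h1
  rw [add_assoc] at h1
  have h2 : mw (1 : Fˣ) + mweta F * mw 1 * mw 1 = 0 := left_eq_add.mp h1
  rw [eta_mw_one, zero_mul, add_zero] at h2
  exact h2

end Stmt13Aux
namespace Stmt13Aux

variable {F : Type} [Field F]

/-- Steinberg relation for a pair of units summing to 1. -/
lemma st_pair (x y : Fˣ) (hxy : (x : F) + (y : F) = 1) : mw x * mw y = 0 := by
  have hx1 : (x : F) ≠ 1 := by
    intro h
    apply y.ne_zero
    rw [h] at hxy
    exact add_eq_left.mp hxy
  have hy : y = Units.mk0 (1 - (x : F)) (sub_ne_zero_of_ne hx1.symm) := by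
    apply Units.ext
    rw [Units.val_mk0]
    exact eq_sub_of_add_eq' hxy
  rw [hy]
  exact mw_steinberg x hx1

lemma inv_sum_zero (x : Fˣ) :
    mw x⁻¹ + mw x + mweta F * mw x⁻¹ * mw x = 0 := by
  have h0 : mw (x⁻¹ * x) = mw x⁻¹ + mw x + mweta F * mw x⁻¹ * mw x := mw_mul_rel _ _
  rw [inv_mul_cancel, mw_one] at h0
  exact h0.symm

/-- If `[x][a] = 0` then `[x⁻¹][a] = 0`. -/
lemma inv_left_vanish {x a : Fˣ} (h : mw x * mw a = 0) : mw x⁻¹ * mw a = 0 := by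
  have hinv : mw x⁻¹ = -(mw x) - mweta F * mw x⁻¹ * mw x := by
    rw [← sub_eq_zero]
    calc mw x⁻¹ - (-(mw x) - mweta F * mw x⁻¹ * mw x)
        = mw x⁻¹ + mw x + mweta F * mw x⁻¹ * mw x := by noncomm_ring
      _ = 0 := inv_sum_zero x
  rw [hinv]
  calc (-(mw x) - mweta F * mw x⁻¹ * mw x) * mw a
      = -(mw x * mw a) - mweta F * mw x⁻¹ * (mw x * mw a) := by noncomm_ring
    _ = 0 := by rw [h]; noncomm_ring

/-- If `[a][x] = 0` then `[a][x⁻¹] = 0`. -/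
lemma inv_right_vanish {a x : Fˣ} (h : mw a * mw x = 0) : mw a * mw x⁻¹ = 0 := by
  have hsum : mw x + mw x⁻¹ + mweta F * mw x * mw x⁻¹ = 0 := by
    have h0 : mw (x * x⁻¹) = mw x + mw x⁻¹ + mweta F * mw x * mw x⁻¹ := mw_mul_rel _ _
    rw [mul_inv_cancel, mw_one] at h0
    exact h0.symm
  have hinv : mw x⁻¹ = -(mw x) - mweta F * mw x * mw x⁻¹ := by
    rw [← sub_eq_zero]
    calc mw x⁻¹ - (-(mw x) - mweta F * mw x * mw x⁻¹)
        = mw x + mw x⁻¹ + mweta F * mw x * mw x⁻¹ := by noncomm_ring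
      _ = 0 := hsum
  conv_lhs => rw [hinv]
  have hea : mw a * mweta F = mweta F * mw a := (eta_comm (mw a)).symm
  calc mw a * (-(mw x) - mweta F * mw x * mw x⁻¹)
      = -(mw a * mw x) - (mw a * mweta F) * mw x * mw x⁻¹ := by noncomm_ring
    _ = -(mw a * mw x) - mweta F * (mw a * mw x) * mw x⁻¹ := by rw [hea]; noncomm_ring
    _ = 0 := by rw [h]; noncomm_ring

/-- `[x][-x] = 0`. -/
lemma mw_mul_neg (x : Fˣ) : mw x * mw (-x) = 0 := by
  by_cases hx1 : (x : F) = 1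
  · have : x = 1 := Units.ext (by simpa using hx1)
    rw [this, mw_one, zero_mul]
  · -- `-x = (1-x) * (1 - x⁻¹)⁻¹`
    have hxne : (1 : F) - (x : F)⁻¹ ≠ 0 :=
      sub_ne_zero.mpr fun h => hx1 (inv_eq_one.mp h.symm)
    set b : Fˣ := Units.mk0 (1 - (x : F)) (sub_ne_zero_of_ne (Ne.symm hx1)) with hb
    set w : Fˣ := Units.mk0 (1 - (x : F)⁻¹) hxne with hw
    have hdec : -x = b * w⁻¹ := by
      apply Units.ext
      rw [Units.val_mul]
      rw [show ((w⁻¹ : Fˣ) : F) = ((w : F))⁻¹ by simp]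
      rw [hb, hw]
      simp only [Units.val_mk0, Units.val_neg]
      have hx0 : (x : F) ≠ 0 := x.ne_zero
      have hx1' : (x : F) - 1 ≠ 0 := sub_ne_zero.mpr hx1
      field_simp
      ring
    have hxb : mw x * mw b = 0 := st_pair x b (by simp [hb])
    have hxw : mw x * mw w = 0 := by
      have h1 : mw x⁻¹ * mw w = 0 := st_pair x⁻¹ w (by simp [hw])
      have := inv_left_vanish h1
      rwa [inv_inv] at this
    have hxwi : mw x * mw w⁻¹ = 0 := inv_right_vanish hxw
    rw [hdec, mw_mul_rel]
    have hea : mw x * mweta F = mweta F * mw x := (eta_comm (mw x)).symm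
    calc mw x * (mw b + mw w⁻¹ + mweta F * mw b * mw w⁻¹)
        = mw x * mw b + mw x * mw w⁻¹ + (mw x * mweta F) * mw b * mw w⁻¹ := by noncomm_ring
      _ = mw x * mw b + mw x * mw w⁻¹ + mweta F * (mw x * mw b) * mw w⁻¹ := by
          rw [hea]; noncomm_ring
      _ = 0 := by rw [hxb, hxwi]; noncomm_ring

/-- `[u][u] = [-1][u]`. -/
lemma mw_self (u : Fˣ) : mw u * mw u = mw (-1 : Fˣ) * mw u := by
  have h1 : mw ((-1 : Fˣ) * (-u)) =
      mw (-1 : Fˣ) + mw (-u) + mweta F * mw (-1) * mw (-u) := mw_mul_rel _ _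
  rw [show ((-1 : Fˣ) * (-u)) = u by simp] at h1
  have hneg : mw (-u) * mw u = 0 := by
    have := mw_mul_neg (-u)
    rwa [neg_neg] at this
  calc mw u * mw u
      = (mw (-1 : Fˣ) + mw (-u) + mweta F * mw (-1) * mw (-u)) * mw u := by rw [← h1]
    _ = mw (-1 : Fˣ) * mw u + mw (-u) * mw u
        + mweta F * mw (-1) * (mw (-u) * mw u) := by noncomm_ring
    _ = mw (-1 : Fˣ) * mw u := by rw [hneg]; noncomm_ring

/-- `η ⋅ [u²] = 0`. -/
lemma eta_mw_sq (u : Fˣ) : mweta F * mw (u * u) = 0 := by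
  rw [mw_mul_rel]
  calc mweta F * (mw u + mw u + mweta F * mw u * mw u)
      = 2 * (mweta F * mw u) + mweta F * (mweta F * (mw u * mw u)) := by noncomm_ring
    _ = 2 * (mweta F * mw u) + mweta F * (mweta F * (mw (-1 : Fˣ) * mw u)) := by rw [mw_self]
    _ = 2 * (mweta F * mw u) + (mweta F * (mweta F * mw (-1 : Fˣ))) * mw u := by noncomm_ring
    _ = 0 := by rw [eta_sq_neg_one]; noncomm_ring

end Stmt13Aux
namespace Stmt13Aux

variable {F : Type} [Field F]

/-- The element `⟨u⟩ = 1 + η[u] ∈ K^MW_0`. -/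
def dK (u : Fˣ) : KMW F := 1 + mweta F * mw u

lemma dK_mul (u v : Fˣ) : dK u * dK v = dK (u * v) := by
  unfold dK
  rw [mw_mul_rel]
  have hea : mw u * mweta F = mweta F * mw u := (eta_comm (mw u)).symm
  calc (1 + mweta F * mw u) * (1 + mweta F * mw v)
      = 1 + mweta F * mw u + mweta F * mw v + mweta F * ((mw u * mweta F) * mw v) := by
        noncomm_ring
    _ = 1 + mweta F * (mw u + mw v + mweta F * mw u * mw v) := by rw [hea]; noncomm_ring

lemma dK_one : dK (1 : Fˣ) = 1 := by
  unfold dK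
  rw [mw_one, mul_zero, add_zero]

lemma dK_sq (v : Fˣ) : dK (v * v) = 1 := by
  unfold dK
  rw [eta_mw_sq, add_zero]

lemma R_sq (u v : Fˣ) : dK (u * v ^ 2) = dK u := by
  rw [show u * v ^ 2 = u * (v * v) by rw [sq], ← dK_mul, dK_sq, mul_one]

lemma R_mul (u v : Fˣ) : dK u * dK v = dK (u * v) := dK_mul u v

lemma hyp_core : (1 + dK (-1 : Fˣ)) * mweta F = 0 := by
  unfold dK
  have h := eta_hyp_rel (F := F)
  have hc : ∀ y : KMW F, mweta F * y = y * mweta F := eta_comm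
  calc (1 + (1 + mweta F * mw (-1 : Fˣ))) * mweta F
      = (mweta F * mw (-1 : Fˣ)) * mweta F + 2 * mweta F := by noncomm_ring
    _ = mweta F * (mweta F * mw (-1 : Fˣ) + 2) := by rw [← hc]; noncomm_ring
    _ = 0 := h

lemma R_hyp (u : Fˣ) : dK u + dK (-u) = 1 + dK (-1 : Fˣ) := by
  have h1 : dK (-u) = dK (-1 : Fˣ) * dK u := by
    rw [dK_mul, neg_one_mul]
  rw [h1]
  have h2 : (1 + dK (-1 : Fˣ)) * (dK u - 1) = 0 := by
    have : dK u - 1 = mweta F * mw u := by unfold dK; noncomm_ring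
    rw [this, ← mul_assoc, hyp_core, zero_mul]
  calc dK u + dK (-1 : Fˣ) * dK u
      = (1 + dK (-1 : Fˣ)) * (dK u - 1) + (1 + dK (-1 : Fˣ)) := by noncomm_ring
    _ = 1 + dK (-1 : Fˣ) := by rw [h2, zero_add]

lemma st_dK (x y : Fˣ) (hxy : (x : F) + (y : F) = 1) :
    dK (x * y) - dK x - dK y + 1 = 0 := by
  have h := st_pair x y hxy
  have hea : mw x * mweta F = mweta F * mw x := (eta_comm (mw x)).symm
  have key : (mweta F * mw x) * (mweta F * mw y) = 0 := by
    calc (mweta F * mw x) * (mweta F * mw y)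
        = mweta F * ((mw x * mweta F) * mw y) := by noncomm_ring
      _ = mweta F * (mweta F * (mw x * mw y)) := by rw [hea]; noncomm_ring
      _ = 0 := by rw [h]; noncomm_ring
  calc dK (x * y) - dK x - dK y + 1
      = dK x * dK y - dK x - dK y + 1 := by rw [dK_mul]
    _ = (dK x - 1) * (dK y - 1) := by noncomm_ring
    _ = (mweta F * mw x) * (mweta F * mw y) := by unfold dK; noncomm_ring
    _ = 0 := key

lemma R_add (u v : Fˣ) (h : (u : F) + (v : F) ≠ 0) :
    dK u + dK v = dK (Units.mk0 ((u : F) + (v : F)) h) +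
      dK (Units.mk0 ((u : F) + (v : F)) h * u * v) := by
  set s : Fˣ := Units.mk0 ((u : F) + (v : F)) h with hs
  have hsum : ((u * s⁻¹ : Fˣ) : F) + ((v * s⁻¹ : Fˣ) : F) = 1 := by
    have : ((s : F)) = (u : F) + (v : F) := by rw [hs, Units.val_mk0]
    rw [Units.val_mul, Units.val_mul, Units.val_inv_eq_inv_val, this, ← add_mul,
      mul_inv_cancel₀ h]
  have hst := st_dK (u * s⁻¹) (v * s⁻¹) hsum
  -- multiply by `dK s`
  have h0 : dK s * (dK (u * s⁻¹ * (v * s⁻¹)) - dK (u * s⁻¹) - dK (v * s⁻¹) + 1) = 0 := by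
    rw [hst, mul_zero]
  have e1 : dK s * dK (u * s⁻¹) = dK u := by
    rw [dK_mul, show s * (u * s⁻¹) = u by rw [mul_comm u s⁻¹, mul_inv_cancel_left]]
  have e2 : dK s * dK (v * s⁻¹) = dK v := by
    rw [dK_mul, show s * (v * s⁻¹) = v by rw [mul_comm v s⁻¹, mul_inv_cancel_left]]
  have e3 : dK s * dK (u * s⁻¹ * (v * s⁻¹)) = dK (s * u * v) := by
    have h4 : s * (u * s⁻¹ * (v * s⁻¹)) * (s * s) = s * u * v := by
      apply Units.ext
      simp only [Units.val_mul, Units.val_inv_eq_inv_val]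
      field_simp
    calc dK s * dK (u * s⁻¹ * (v * s⁻¹))
        = dK (s * (u * s⁻¹ * (v * s⁻¹))) := dK_mul _ _
      _ = dK (s * (u * s⁻¹ * (v * s⁻¹))) * dK (s * s) := by rw [dK_sq, mul_one]
      _ = dK (s * (u * s⁻¹ * (v * s⁻¹)) * (s * s)) := dK_mul _ _
      _ = dK (s * u * v) := by rw [h4]
  rw [mul_add, mul_sub, mul_sub, e1, e2, e3, mul_one] at h0
  rw [← sub_eq_zero]
  calc dK u + dK v - (dK s + dK (s * u * v))
      = -(dK (s * u * v) - dK u - dK v + dK s) := by noncomm_ring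
    _ = 0 := by rw [h0, neg_zero]

end Stmt13Aux
namespace Stmt13Aux

variable (F : Type) [Field F]

/-- Generating set of the degree-0 part: `η` and the `η[u]`. -/
def genSet : Set (KMW F) := insert (mweta F) (Set.range fun u : Fˣ => mweta F * mw u)

lemma genSet_comm : ∀ x ∈ genSet F, ∀ y ∈ genSet F, x * y = y * x := by
  have key : ∀ u v : Fˣ, (mweta F * mw u) * (mweta F * mw v)
      = dK (u * v) - dK u - dK v + 1 := by
    intro u v
    have h1 : dK u * dK v = dK (u * v) := dK_mul u v
    calc (mweta F * mw u) * (mweta F * mw v)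
        = (dK u - 1) * (dK v - 1) := by unfold dK; noncomm_ring
      _ = dK u * dK v - dK u - dK v + 1 := by noncomm_ring
      _ = dK (u * v) - dK u - dK v + 1 := by rw [h1]
  rintro x (rfl | ⟨u, rfl⟩) y (rfl | ⟨v, rfl⟩)
  · rfl
  · exact eta_comm _
  · exact (eta_comm _).symm
  · rw [key u v, key v u, mul_comm u v]
    noncomm_ring

/-- The (commutative) subring of `KMW` generated by `η` and the `η[u]`. -/
def Acomm : Subring (KMW F) := Subring.closure (genSet F)

noncomputable instance : CommRing (Acomm F) :=
  Subring.closureCommRingOfComm (genSet_comm F)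

variable {F}

lemma Acomm.coe_add (x y : Acomm F) : ((x + y : Acomm F) : KMW F) = (x : KMW F) + y := rfl
lemma Acomm.coe_mul (x y : Acomm F) : ((x * y : Acomm F) : KMW F) = (x : KMW F) * y := rfl
lemma Acomm.coe_one : (((1 : Acomm F)) : KMW F) = 1 := rfl

variable (F)

/-- `η[u]` as an element of `Acomm`. -/
def etaMwA (u : Fˣ) : Acomm F :=
  ⟨mweta F * mw u, Subring.subset_closure (Set.mem_insert_iff.mpr (Or.inr ⟨u, rfl⟩))⟩

/-- The ring homomorphism `MvPolynomial Fˣ ℤ →+* Acomm` underlying `φ₀`. -/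
def f0 : MvPolynomial Fˣ ℤ →+* Acomm F :=
  MvPolynomial.eval₂Hom (Int.castRingHom (Acomm F)) fun u => 1 + etaMwA F u

lemma coe_f0_X (u : Fˣ) : ((f0 F (MvPolynomial.X u) : Acomm F) : KMW F) = dK u := by
  rw [f0]
  erw [MvPolynomial.eval₂Hom_X']
  rfl

set_option synthInstance.maxHeartbeats 1000000 in
set_option maxHeartbeats 1000000 in
lemma f0_rel : ∀ ⦃x y : MvPolynomial Fˣ ℤ⦄, GWRel F x y → f0 F x = f0 F y := by
  intro x y h
  induction h with
  | sq u v =>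
    apply Subtype.ext
    rw [coe_f0_X, coe_f0_X]
    exact R_sq u v
  | hyp u =>
    apply Subtype.ext
    rw [map_add (f0 F), map_add (f0 F), map_one (f0 F), Acomm.coe_add, Acomm.coe_add]
    erw [Acomm.coe_one]
    rw [coe_f0_X, coe_f0_X, coe_f0_X]
    exact R_hyp u
  | add u v h =>
    apply Subtype.ext
    rw [map_add (f0 F), map_add (f0 F), Acomm.coe_add, Acomm.coe_add,
      coe_f0_X, coe_f0_X, coe_f0_X, coe_f0_X]
    exact R_add u v h
  | mul u v =>
    apply Subtype.ext
    rw [map_mul (f0 F), Acomm.coe_mul, coe_f0_X, coe_f0_X, coe_f0_X]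
    exact R_mul u v
  | one =>
    apply Subtype.ext
    rw [map_one (f0 F)]
    erw [Acomm.coe_one]
    rw [coe_f0_X]
    exact dK_one

/-- The ring homomorphism `φ₀ : GW F →+* KMW F`. -/
noncomputable def phi0 : GW F →+* KMW F :=
  (Acomm F).subtype.comp (RingQuot.lift ⟨f0 F, f0_rel F⟩)

lemma phi0_gw (u : Fˣ) : phi0 F (gw u) = dK u := by
  have h : RingQuot.lift ⟨f0 F, f0_rel F⟩ ((RingQuot.mkRingHom (GWRel F)) (MvPolynomial.X u))
      = f0 F (MvPolynomial.X u) := RingQuot.lift_mkRingHom_apply _ _ _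
  calc phi0 F (gw u)
      = ((f0 F (MvPolynomial.X u) : Acomm F) : KMW F) := by
        rw [phi0, gw]
        exact congrArg (Acomm F).subtype h
    _ = dK u := coe_f0_X F u

end Stmt13Aux
namespace Stmt13Aux

variable {F : Type} [Field F]

/-! ### Lemmas in `GW` -/

lemma gw_mul (u v : Fˣ) : gw u * gw v = gw (u * v) := by
  have h := RingQuot.mkRingHom_rel (GWRel.mul (F := F) u v)
  simp only [map_mul] at h
  exact h

lemma gw_one : gw (1 : Fˣ) = (1 : GW F) := by
  have h := RingQuot.mkRingHom_rel (GWRel.one (F := F))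
  simp only [map_one] at h
  exact h

lemma gw_hyp (u : Fˣ) : gw u + gw (-u) = 1 + gw (-1 : Fˣ) := by
  have h := RingQuot.mkRingHom_rel (GWRel.hyp (F := F) u)
  simp only [map_add, map_one] at h
  exact h

lemma gw_add (u v : Fˣ) (h : (u : F) + (v : F) ≠ 0) :
    gw u + gw v = gw (Units.mk0 ((u : F) + (v : F)) h) +
      gw (Units.mk0 ((u : F) + (v : F)) h * u * v) := by
  have h2 := RingQuot.mkRingHom_rel (GWRel.add (F := F) u v h)
  simp only [map_add] at h2
  exact h2

lemma gw_steinberg (a : Fˣ) (h1 : (a : F) ≠ 1) :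
    (gw a - 1) * (gw (Units.mk0 (1 - (a : F)) (sub_ne_zero_of_ne h1.symm)) - 1) = (0 : GW F) := by
  set b : Fˣ := Units.mk0 (1 - (a : F)) (sub_ne_zero_of_ne h1.symm) with hb
  have hsum : (a : F) + (b : F) ≠ 0 := by
    rw [hb, Units.val_mk0]
    simp
  have h2 := gw_add a b hsum
  have h3 : Units.mk0 ((a : F) + (b : F)) hsum = 1 := by
    apply Units.ext
    rw [Units.val_mk0, hb, Units.val_mk0, Units.val_one]
    ring
  rw [h3, gw_one, one_mul] at h2
  calc (gw a - 1) * (gw b - 1)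
      = gw a * gw b - (gw a + gw b) + 1 := by ring
    _ = gw (a * b) - (1 + gw (a * b)) + 1 := by rw [gw_mul, h2]
    _ = 0 := by ring

/-- The rank homomorphism `GW F →+* ℤ`. -/
def rankGW (F : Type) [Field F] : GW F →+* ℤ :=
  RingQuot.lift ⟨MvPolynomial.eval fun _ : Fˣ => (1 : ℤ), by
    rintro x y h
    induction h with
    | sq u v => simp
    | hyp u => simp
    | add u v h => simp
    | mul u v => simp
    | one => simp⟩

lemma rankGW_gw (u : Fˣ) : rankGW F (gw u) = 1 := by
  have h : RingQuot.lift ⟨MvPolynomial.eval fun _ : Fˣ => (1 : ℤ), by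
      rintro x y h
      induction h with
      | sq u v => simp
      | hyp u => simp
      | add u v h => simp
      | mul u v => simp
      | one => simp⟩ ((RingQuot.mkRingHom (GWRel F)) (MvPolynomial.X u))
      = MvPolynomial.eval (fun _ : Fˣ => (1 : ℤ)) (MvPolynomial.X u) :=
    RingQuot.lift_mkRingHom_apply _ _ _
  rw [rankGW, gw]
  exact h.trans (by simp)

lemma wq_hGW : wq F (hGW F) = 0 :=
  Ideal.Quotient.eq_zero_iff_mem.mpr (Ideal.subset_span rfl)

/-- Extensionality for ring homomorphisms out of `GW F`. -/
lemma gw_hom_ext {T : Type} [Semiring T] {f g : GW F →+* T}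
    (h : ∀ u : Fˣ, f (gw u) = g (gw u)) : f = g := by
  apply RingQuot.ringQuot_ext
  apply MvPolynomial.ringHom_ext
  · intro r
    calc (f.comp (RingQuot.mkRingHom (GWRel F))) (MvPolynomial.C r)
        = ((f.comp (RingQuot.mkRingHom (GWRel F))).comp MvPolynomial.C) r := rfl
      _ = ((g.comp (RingQuot.mkRingHom (GWRel F))).comp MvPolynomial.C) r := by
          congr 1
          exact RingHom.ext_int _ _
      _ = (g.comp (RingQuot.mkRingHom (GWRel F))) (MvPolynomial.C r) := rfl
  · intro u
    exact h u

/-- `h ⋅ x = rank x ⋅ h` in `GW`. -/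
lemma hGW_mul (x : GW F) : hGW F * x = (rankGW F x) • hGW F := by
  obtain ⟨p, rfl⟩ := RingQuot.mkRingHom_surjective (GWRel F) x
  induction p using MvPolynomial.induction_on with
  | C a =>
    have hc : (RingQuot.mkRingHom (GWRel F)) (MvPolynomial.C a) = ((a : ℤ) : GW F) := by
      have h1 : (MvPolynomial.C a : MvPolynomial Fˣ ℤ) = ((a : ℤ) : MvPolynomial Fˣ ℤ) :=
        eq_intCast (MvPolynomial.C : ℤ →+* MvPolynomial Fˣ ℤ) a
      rw [h1]
      exact map_intCast (RingQuot.mkRingHom (GWRel F)) a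
    rw [hc, map_intCast (rankGW F) a, Int.cast_id, zsmul_eq_mul]
    exact (Int.cast_comm a (hGW F)).symm
  | add p q hp hq =>
    have e : (RingQuot.mkRingHom (GWRel F)) (p + q)
        = @HAdd.hAdd (GW F) (GW F) (GW F) _ ((RingQuot.mkRingHom (GWRel F)) p)
          ((RingQuot.mkRingHom (GWRel F)) q) :=
      map_add _ p q
    rw [e]
    refine (mul_add (hGW F) _ _).trans ?_
    erw [hp, hq, map_add, add_smul]
  | mul_X p u hp =>
    have hgu : hGW F * gw u = hGW F := by
      have h1 : gw (-1 : Fˣ) * gw u = gw (-u) := by rw [gw_mul, neg_one_mul]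
      calc hGW F * gw u = gw u + gw (-1 : Fˣ) * gw u := by rw [hGW]; ring
        _ = gw u + gw (-u) := by rw [h1]
        _ = 1 + gw (-1 : Fˣ) := gw_hyp u
        _ = hGW F := rfl
    erw [map_mul, ← mul_assoc, hp, smul_mul_assoc,
      show (RingQuot.mkRingHom (GWRel F)) (MvPolynomial.X u) = gw u from rfl, hgu,
      map_mul, rankGW_gw, mul_one]

end Stmt13Aux
namespace Stmt13Aux

open LaurentPolynomial

variable (F : Type) [Field F]

/-- Extensionality for ring homomorphisms out of `KMW F`. -/
lemma kmw_hom_ext {T : Type} [Ring T] {f g : KMW F →+* T}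
    (h1 : ∀ u : Fˣ, f (mw u) = g (mw u)) (h2 : f (mweta F) = g (mweta F)) : f = g := by
  apply RingQuot.ringQuot_ext
  ext x
  show f ((RingQuot.mkRingHom (MWRel F)) x) = g ((RingQuot.mkRingHom (MWRel F)) x)
  induction x using FreeAlgebra.induction with
  | grade0 r =>
    have hr : (algebraMap ℤ (FreeAlgebra ℤ (MWGen F)) r) = ((r : ℤ) : FreeAlgebra ℤ (MWGen F)) :=
      by simp
    erw [hr, map_intCast (RingQuot.mkRingHom (MWRel F)) r, map_intCast f, map_intCast g]
  | grade1 x =>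
    cases x with
    | of u => exact h1 u
    | eta => exact h2
  | mul a b ha hb => erw [map_mul, map_mul, map_mul, ha, hb]
  | add a b ha hb => erw [map_add, map_add, map_add, ha, hb]

/-- The augmentation `KMW F →+* ℤ` killing `η` and all `[u]`. -/
def rk0 : KMW F →+* ℤ :=
  RingQuot.lift ⟨(FreeAlgebra.lift ℤ (fun _ : MWGen F => (0 : ℤ))).toRingHom, by
    rintro x y h
    induction h with
    | steinberg a h1 => simp [FreeAlgebra.lift_ι_apply]
    | mul_rel a b => simp [FreeAlgebra.lift_ι_apply]
    | comm_rel u => simp [FreeAlgebra.lift_ι_apply]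
    | hyp => simp [FreeAlgebra.lift_ι_apply]⟩

lemma rk0_mw (u : Fˣ) : rk0 F (mw u) = 0 := by
  have h := RingQuot.lift_mkRingHom_apply
    (FreeAlgebra.lift ℤ (fun _ : MWGen F => (0 : ℤ))).toRingHom
    (r := MWRel F) (by
      rintro x y h
      induction h with
      | steinberg a h1 => simp [FreeAlgebra.lift_ι_apply]
      | mul_rel a b => simp [FreeAlgebra.lift_ι_apply]
      | comm_rel u => simp [FreeAlgebra.lift_ι_apply]
      | hyp => simp [FreeAlgebra.lift_ι_apply]) (FreeAlgebra.ι ℤ (MWGen.of u))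
  rw [rk0, mw]
  exact h.trans (by simp [FreeAlgebra.lift_ι_apply])

lemma rk0_eta : rk0 F (mweta F) = 0 := by
  have h := RingQuot.lift_mkRingHom_apply
    (FreeAlgebra.lift ℤ (fun _ : MWGen F => (0 : ℤ))).toRingHom
    (r := MWRel F) (by
      rintro x y h
      induction h with
      | steinberg a h1 => simp [FreeAlgebra.lift_ι_apply]
      | mul_rel a b => simp [FreeAlgebra.lift_ι_apply]
      | comm_rel u => simp [FreeAlgebra.lift_ι_apply]
      | hyp => simp [FreeAlgebra.lift_ι_apply]) (FreeAlgebra.ι ℤ MWGen.eta)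
  rw [rk0, mweta]
  exact h.trans (by simp [FreeAlgebra.lift_ι_apply])

/-- The generator images for `Θ : KMW F →+* (W F)[T;T⁻¹]`. -/
def gT : MWGen F → LaurentPolynomial (WittRing F)
  | .of u => T 1 * C (wq F (gw u) - 1)
  | .eta => T (-1)

lemma theta_rel : ∀ ⦃x y : FreeAlgebra ℤ (MWGen F)⦄, MWRel F x y →
    (FreeAlgebra.lift ℤ (gT F)).toRingHom x = (FreeAlgebra.lift ℤ (gT F)).toRingHom y := by
  rintro x y h
  induction h with
  | steinberg a h1 =>
    simp only [AlgHom.toRingHom_eq_coe, RingHom.coe_coe, map_mul, map_zero,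
      FreeAlgebra.lift_ι_apply]
    show (T 1 * C (wq F (gw a) - 1)) * (T 1 * C (wq F (gw _) - 1)) = 0
    have key : (wq F (gw a) - 1) * (wq F (gw (Units.mk0 (1 - (a : F))
        (sub_ne_zero_of_ne h1.symm))) - 1) = 0 := by
      rw [show (1 : WittRing F) = wq F 1 from (map_one (wq F)).symm, ← map_sub, ← map_sub,
        ← map_mul, gw_steinberg a h1, map_zero]
    rw [mul_mul_mul_comm, ← map_mul, key, map_zero, mul_zero]
  | mul_rel a b =>
    simp only [AlgHom.toRingHom_eq_coe, RingHom.coe_coe, map_mul, map_add,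
      FreeAlgebra.lift_ι_apply]
    show T 1 * C (wq F (gw (a * b)) - 1) =
      T 1 * C (wq F (gw a) - 1) + T 1 * C (wq F (gw b) - 1) +
        T (-1) * (T 1 * C (wq F (gw a) - 1)) * (T 1 * C (wq F (gw b) - 1))
    have h3 : T (-1) * (T 1 * C (wq F (gw a) - 1)) * (T 1 * C (wq F (gw b) - 1))
        = T 1 * C ((wq F (gw a) - 1) * (wq F (gw b) - 1)) := by
      rw [map_mul]
      have : (T (-1) : LaurentPolynomial (WittRing F)) * T 1 * T 1 = T 1 := by
        rw [← T_add, ← T_add]; norm_num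
      calc T (-1) * (T 1 * C (wq F (gw a) - 1)) * (T 1 * C (wq F (gw b) - 1))
          = (T (-1) * T 1 * T 1) * (C (wq F (gw a) - 1) * C (wq F (gw b) - 1)) := by ring
        _ = T 1 * (C (wq F (gw a) - 1) * C (wq F (gw b) - 1)) := by rw [this]
    rw [h3, ← mul_add, ← mul_add, ← map_add, ← map_add]
    congr 1
    have hab : wq F (gw (a * b)) = wq F (gw a) * wq F (gw b) := by
      rw [← map_mul, gw_mul]
    rw [hab]
    ring
  | comm_rel u =>
    simp only [AlgHom.toRingHom_eq_coe, RingHom.coe_coe, map_mul, FreeAlgebra.lift_ι_apply]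
    show T (-1) * (T 1 * C (wq F (gw u) - 1)) = (T 1 * C (wq F (gw u) - 1)) * T (-1)
    ring
  | hyp =>
    simp only [AlgHom.toRingHom_eq_coe, RingHom.coe_coe, map_mul, map_add, map_zero,
      map_ofNat, FreeAlgebra.lift_ι_apply]
    show T (-1) * (T (-1) * (T 1 * C (wq F (gw (-1 : Fˣ)) - 1)) + 2) = 0
    have h1 : (T (-1) : LaurentPolynomial (WittRing F)) * T 1 = 1 := by
      rw [← T_add]; norm_num [T_zero]
    have h2 : ((2 : LaurentPolynomial (WittRing F))) = C 2 := by
      rw [map_ofNat]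
    have h3 : wq F (gw (-1 : Fˣ)) - 1 + 2 = wq F (hGW F) := by
      rw [hGW, map_add, map_one]
      ring
    calc T (-1) * (T (-1) * (T 1 * C (wq F (gw (-1 : Fˣ)) - 1)) + 2)
        = T (-1) * ((T (-1) * T 1) * C (wq F (gw (-1 : Fˣ)) - 1) + 2) := by ring
      _ = T (-1) * (C (wq F (gw (-1 : Fˣ)) - 1) + C 2) := by rw [h1, h2, one_mul]
      _ = T (-1) * C (wq F (gw (-1 : Fˣ)) - 1 + 2) := by rw [map_add]
      _ = T (-1) * C (wq F (hGW F)) := by rw [h3]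
      _ = 0 := by rw [wq_hGW, map_zero, mul_zero]

/-- The realization `Θ : KMW F →+* W(F)[T;T⁻¹]`. -/
noncomputable def theta : KMW F →+* LaurentPolynomial (WittRing F) :=
  RingQuot.lift ⟨(FreeAlgebra.lift ℤ (gT F)).toRingHom, theta_rel F⟩

lemma theta_mw (u : Fˣ) : theta F (mw u) = T 1 * C (wq F (gw u) - 1) := by
  have h := RingQuot.lift_mkRingHom_apply (FreeAlgebra.lift ℤ (gT F)).toRingHom
    (theta_rel F) (FreeAlgebra.ι ℤ (MWGen.of u))
  rw [theta, mw]
  exact h.trans (by simp [FreeAlgebra.lift_ι_apply, gT])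

lemma theta_eta : theta F (mweta F) = T (-1) := by
  have h := RingQuot.lift_mkRingHom_apply (FreeAlgebra.lift ℤ (gT F)).toRingHom
    (theta_rel F) (FreeAlgebra.ι ℤ MWGen.eta)
  rw [theta, mweta]
  exact h.trans (by simp [FreeAlgebra.lift_ι_apply, gT])

lemma theta_dK (u : Fˣ) : theta F (dK u) = C (wq F (gw u)) := by
  rw [dK, map_add, map_mul, map_one, theta_mw, theta_eta]
  have h1 : (T (-1) : LaurentPolynomial (WittRing F)) * (T 1 * C (wq F (gw u) - 1))
      = C (wq F (gw u) - 1) := by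
    rw [← mul_assoc, ← T_add]
    norm_num [T_zero]
  rw [h1, show (1 : LaurentPolynomial (WittRing F)) = C 1 from (map_one _).symm, ← map_add]
  congr 1
  ring

lemma theta_phi0 : (theta F).comp (phi0 F) = (C : WittRing F →+* _).comp (wq F) := by
  apply gw_hom_ext
  intro u
  rw [RingHom.comp_apply, RingHom.comp_apply, phi0_gw, theta_dK]

lemma rk0_phi0 : (rk0 F).comp (phi0 F) = rankGW F := by
  apply gw_hom_ext
  intro u
  rw [RingHom.comp_apply, phi0_gw, dK, map_add, map_mul, map_one, rk0_eta, rk0_mw, rankGW_gw]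
  norm_num

lemma C_inj : Function.Injective (C : WittRing F → LaurentPolynomial (WittRing F)) := by
  intro a b h
  have h0 : (C a : LaurentPolynomial (WittRing F)).coeff 0 = (C b : LaurentPolynomial (WittRing F)).coeff 0 := by
    rw [h]
  simpa [LaurentPolynomial.C_apply] using h0

end Stmt13Aux
namespace Stmt13Aux

variable {F : Type} [Field F]

/-- Injectivity of `φ₀`. -/
lemma phi0_inj : Function.Injective (phi0 F) := by
  intro x y hxy
  have hW : wq F x = wq F y := by
    apply C_inj F
    calc (LaurentPolynomial.C (wq F x)) = theta F (phi0 F x) :=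
          (RingHom.congr_fun (theta_phi0 F) x).symm
      _ = theta F (phi0 F y) := by rw [hxy]
      _ = LaurentPolynomial.C (wq F y) := RingHom.congr_fun (theta_phi0 F) y
  have hrk : rankGW F x = rankGW F y := by
    calc rankGW F x = rk0 F (phi0 F x) := (RingHom.congr_fun (rk0_phi0 F) x).symm
      _ = rk0 F (phi0 F y) := by rw [hxy]
      _ = rankGW F y := RingHom.congr_fun (rk0_phi0 F) y
  have hmem : x - y ∈ Ideal.span {hGW F} := by
    rw [← Ideal.Quotient.eq_zero_iff_mem]
    show wq F (x - y) = 0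
    rw [map_sub, hW, sub_self]
  obtain ⟨c, hc⟩ := Ideal.mem_span_singleton'.mp hmem
  have hc' : x - y = (rankGW F c) • hGW F := by
    rw [← hc, mul_comm]
    exact hGW_mul c
  have hrk0 : rankGW F (x - y) = 0 := by rw [map_sub, hrk, sub_self]
  rw [hc'] at hrk0
  have hrkh : rankGW F (hGW F) = 2 := by
    rw [hGW, map_add, map_one, rankGW_gw]; norm_num
  rw [map_zsmul, hrkh, smul_eq_mul] at hrk0
  have : rankGW F c = 0 := by omega
  rw [this, zero_smul, sub_eq_zero] at hc'
  exact hc'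

/-! ### The homogeneous components -/

/-- The product of two generator monomials is a generator monomial. -/
lemma mono_mul {m r : ℕ} (v : Fin r → Fˣ) {m' r' : ℕ} (v' : Fin r' → Fˣ) :
    (mweta F ^ m * (List.ofFn fun i => mw (v i)).prod) *
      (mweta F ^ m' * (List.ofFn fun i => mw (v' i)).prod)
    = mweta F ^ (m + m') *
        (List.ofFn fun i => mw (Fin.append v v' i)).prod := by
  set P := (List.ofFn fun i => mw (v i)).prod with hP
  set P' := (List.ofFn fun i => mw (v' i)).prod with hP'
  have hcomm : P * mweta F ^ m' = mweta F ^ m' * P :=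
    ((commute_eta P).pow_left m').eq.symm
  have hof : (List.ofFn fun i => mw (Fin.append v v' i))
      = (List.ofFn fun i => mw (v i)) ++ (List.ofFn fun i => mw (v' i)) := by
    rw [List.ofFn_add]
    congr 1
    · apply congrArg; funext i; exact congrArg mw (Fin.append_left v v' i)
    · apply congrArg; funext i; rw [Fin.append_right]
  calc (mweta F ^ m * P) * (mweta F ^ m' * P')
      = mweta F ^ m * ((P * mweta F ^ m') * P') := by noncomm_ring
    _ = mweta F ^ m * ((mweta F ^ m' * P) * P') := by rw [hcomm]
    _ = (mweta F ^ m * mweta F ^ m') * (P * P') := by noncomm_ring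
    _ = mweta F ^ (m + m') * (P * P') := by rw [pow_add]
    _ = mweta F ^ (m + m') * (List.ofFn fun i => mw (Fin.append v v' i)).prod := by
        rw [hof, List.prod_append]

end Stmt13Aux
namespace Stmt13Aux

variable {F : Type} [Field F]

/-- Membership of the monomial generators. -/
lemma mono_mem {n : ℤ} {m r : ℕ} (v : Fin r → Fˣ) (hd : (r : ℤ) - (m : ℤ) = n) :
    mweta F ^ m * (List.ofFn fun i => mw (v i)).prod ∈ KMWcomp F n :=
  AddSubgroup.subset_closure ⟨m, r, v, hd, rfl⟩

lemma comp_mul {p q : ℤ} {a b : KMW F} (ha : a ∈ KMWcomp F p) (hb : b ∈ KMWcomp F q) :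
    a * b ∈ KMWcomp F (p + q) := by
  -- first reduce to the case of `b` a generator
  suffices hgen : ∀ y ∈ {x : KMW F | ∃ (m r : ℕ) (v : Fin r → Fˣ),
      (r : ℤ) - (m : ℤ) = q ∧ x = (mweta F) ^ m * (List.ofFn fun i => mw (v i)).prod},
      ∀ {a : KMW F}, a ∈ KMWcomp F p → a * y ∈ KMWcomp F (p + q) by
    revert b
    have : KMWcomp F q ≤ AddSubgroup.comap (AddMonoidHom.mulLeft a) (KMWcomp F (p + q)) := by
      apply AddSubgroup.closure_le _ |>.mpr
      intro y hy
      exact hgen y hy ha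
    exact fun b hb => this hb
  intro y hy
  obtain ⟨m', r', v', hd', rfl⟩ := hy
  have hle : KMWcomp F p ≤ AddSubgroup.comap
      (AddMonoidHom.mulRight ((mweta F) ^ m' * (List.ofFn fun i => mw (v' i)).prod))
      (KMWcomp F (p + q)) := by
    apply AddSubgroup.closure_le _ |>.mpr
    rintro x ⟨m, r, v, hd, rfl⟩
    show _ * _ ∈ KMWcomp F (p + q)
    rw [mono_mul]
    exact mono_mem (Fin.append v v') (by push_cast; omega)
  intro a ha
  exact hle ha

lemma one_mem_comp0 : (1 : KMW F) ∈ KMWcomp F 0 := by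
  have h := mono_mem (F := F) (n := 0) (m := 0) (r := 0) (fun i => i.elim0) (by norm_num)
  simpa using h

lemma intCast_mem_comp0 (a : ℤ) : ((a : KMW F)) ∈ KMWcomp F 0 := by
  have : ((a : KMW F)) = a • (1 : KMW F) := by simp
  rw [this]
  exact AddSubgroup.zsmul_mem _ one_mem_comp0 a

lemma dK_mem_comp0 (u : Fˣ) : dK u ∈ KMWcomp F 0 := by
  apply AddSubgroup.add_mem _ one_mem_comp0
  have h := mono_mem (F := F) (n := 0) (m := 1) (r := 1) (fun _ => u) (by norm_num)
  simpa using h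

lemma eta_pow_mem (n : ℕ) : (mweta F) ^ n ∈ KMWcomp F (-(n : ℤ)) := by
  have h := mono_mem (F := F) (n := -(n:ℤ)) (m := n) (r := 0) (fun i => i.elim0) (by norm_num)
  simpa using h

/-- `φ₀` lands in the degree-0 component. -/
lemma phi0_mem_comp0 (x : GW F) : phi0 F x ∈ KMWcomp F 0 := by
  obtain ⟨p, rfl⟩ := RingQuot.mkRingHom_surjective (GWRel F) x
  induction p using MvPolynomial.induction_on with
  | C a =>
    have hc : (RingQuot.mkRingHom (GWRel F)) (MvPolynomial.C a) = ((a : ℤ) : GW F) := by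
      have h1 : (MvPolynomial.C a : MvPolynomial Fˣ ℤ) = ((a : ℤ) : MvPolynomial Fˣ ℤ) :=
        eq_intCast (MvPolynomial.C : ℤ →+* MvPolynomial Fˣ ℤ) a
      rw [h1]
      exact map_intCast (RingQuot.mkRingHom (GWRel F)) a
    erw [hc, map_intCast]
    exact intCast_mem_comp0 a
  | add p q hp hq =>
    erw [map_add, map_add]
    exact AddSubgroup.add_mem _ hp hq
  | mul_X p u hp =>
    have e : (RingQuot.mkRingHom (GWRel F)) (p * MvPolynomial.X u)
        = @HMul.hMul (GW F) (GW F) (GW F) _ ((RingQuot.mkRingHom (GWRel F)) p)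
          ((RingQuot.mkRingHom (GWRel F)) (MvPolynomial.X u)) :=
      map_mul _ _ _
    erw [e, map_mul, show (RingQuot.mkRingHom (GWRel F)) (MvPolynomial.X u) = gw u from rfl,
      phi0_gw]
    have := comp_mul hp (dK_mem_comp0 u)
    simpa using this

/-- `φ₀` of the product `∏ (⟨uᵢ⟩ - 1)`. -/
lemma phi0_prod (r : ℕ) (v : Fin r → Fˣ) :
    phi0 F ((List.ofFn fun i => gw (v i) - 1).prod)
      = mweta F ^ r * (List.ofFn fun i => mw (v i)).prod := by
  induction r with
  | zero => simp
  | succ r ih =>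
    rw [List.ofFn_succ, List.ofFn_succ, List.prod_cons, List.prod_cons, map_mul, map_sub,
      map_one, phi0_gw, ih (fun i => v i.succ)]
    have h1 : dK (v 0) - 1 = mweta F * mw (v 0) := by rw [dK]; noncomm_ring
    rw [h1]
    have h2 : mw (v 0) * mweta F ^ r = mweta F ^ r * mw (v 0) :=
      ((commute_eta (mw (v 0))).pow_left r).eq.symm
    calc mweta F * mw (v 0) * (mweta F ^ r * (List.ofFn fun i => mw (v i.succ)).prod)
        = mweta F * ((mw (v 0) * mweta F ^ r) * (List.ofFn fun i => mw (v i.succ)).prod) := by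
          noncomm_ring
      _ = mweta F * ((mweta F ^ r * mw (v 0)) * (List.ofFn fun i => mw (v i.succ)).prod) := by
          rw [h2]
      _ = (mweta F * mweta F ^ r) * (mw (v 0) * (List.ofFn fun i => mw (v i.succ)).prod) := by
          noncomm_ring
      _ = mweta F ^ (r + 1) * (mw (v 0) * (List.ofFn fun i => mw (v i.succ)).prod) := by
          rw [pow_succ']
end Stmt13Aux
namespace Stmt13Aux

variable {F : Type} [Field F]

lemma comp0_surj : ∀ y ∈ KMWcomp F 0, ∃ x : GW F, phi0 F x = y := by
  have hle : KMWcomp F 0 ≤ AddMonoidHom.range (phi0 F).toAddMonoidHom := by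
    apply AddSubgroup.closure_le _ |>.mpr
    rintro x ⟨m, r, v, hd, rfl⟩
    have hm : m = r := by omega
    subst hm
    exact ⟨(List.ofFn fun i => gw (v i) - 1).prod, phi0_prod _ v⟩
  intro y hy
  obtain ⟨x, hx⟩ := hle hy
  exact ⟨x, hx⟩

lemma phi0_hGW : phi0 F (hGW F) = 2 + mweta F * mw (-1 : Fˣ) := by
  rw [hGW, map_add, map_one, phi0_gw, dK, ← add_assoc]
  norm_num

lemma phi0_hGW_eta : phi0 F (hGW F) * mweta F = 0 := by
  rw [phi0_hGW]
  have h : (2 + mweta F * mw (-1 : Fˣ)) * mweta F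
      = mweta F * (mweta F * mw (-1 : Fˣ) + 2) := by
    rw [add_comm (2 : KMW F)]
    exact (eta_comm _).symm
  rw [h, eta_hyp_rel]

set_option synthInstance.maxHeartbeats 1000000 in
set_option maxHeartbeats 1000000 in
/-- The degree `-n` map `W(F) →+ K^MW`. -/
noncomputable def phiN (F : Type) [Field F] (n : ℕ) (hn : 1 ≤ n) : WittRing F →+ KMW F :=
  letI : Module (GW F) (KMW F) := Module.compHom (KMW F) (phi0 F)
  let f : GW F →ₗ[GW F] KMW F :=
    { toFun := fun x => phi0 F x * (mweta F) ^ n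
      map_add' := by
        intro x y
        show phi0 F (x + y) * (mweta F) ^ n = _
        rw [map_add, add_mul]
      map_smul' := by
        intro r x
        show phi0 F (r * x) * mweta F ^ n = phi0 F r * (phi0 F x * mweta F ^ n)
        rw [map_mul, mul_assoc] }
  have hker : Ideal.span {hGW F} ≤ LinearMap.ker f := by
    rw [Ideal.span_le]
    rintro x hx
    rw [Set.mem_singleton_iff] at hx
    subst hx
    show phi0 F (hGW F) * mweta F ^ n = 0
    obtain ⟨k, rfl⟩ : ∃ k, n = k + 1 := ⟨n - 1, by omega⟩
    rw [pow_succ', ← mul_assoc, phi0_hGW_eta, zero_mul]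
  (Submodule.liftQ (Ideal.span {hGW F}) f hker).toAddMonoidHom

set_option synthInstance.maxHeartbeats 1000000 in
set_option maxHeartbeats 1000000 in
lemma phiN_mk (n : ℕ) (hn : 1 ≤ n) (x : GW F) :
    phiN F n hn (wq F x) = phi0 F x * (mweta F) ^ n := rfl

end Stmt13Aux

open Stmt13Aux

theorem stmt13 (F : Type) [Field F] :
    (∃ φ₀ : GW F →+* KMW F,
      (∀ u : Fˣ, φ₀ (gw u) = 1 + mweta F * mw u) ∧
      Function.Injective φ₀ ∧
      (∀ x : GW F, φ₀ x ∈ KMWcomp F 0) ∧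
      (∀ y ∈ KMWcomp F 0, ∃ x : GW F, φ₀ x = y)) ∧
    ∀ n : ℕ, 1 ≤ n →
      ∃ φ : WittRing F →+ KMW F,
        (∀ u : Fˣ, φ (wq F (gw u)) = (mweta F) ^ n * (1 + mweta F * mw u)) ∧
        Function.Injective φ ∧
        (∀ x : WittRing F, φ x ∈ KMWcomp F (-(n : ℤ))) ∧
        (∀ y ∈ KMWcomp F (-(n : ℤ)), ∃ x : WittRing F, φ x = y) := by
  constructor
  · exact ⟨phi0 F, fun u => phi0_gw F u, phi0_inj, phi0_mem_comp0, comp0_surj⟩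
  · intro n hn
    refine ⟨phiN F n hn, ?_, ?_, ?_, ?_⟩
    · intro u
      rw [phiN_mk n hn, phi0_gw]
      exact ((commute_eta (dK u)).pow_left n).eq.symm
    · intro a b hab
      obtain ⟨x, rfl⟩ := Ideal.Quotient.mk_surjective a
      obtain ⟨y, rfl⟩ := Ideal.Quotient.mk_surjective b
      replace hab : phiN F n hn (wq F x) = phiN F n hn (wq F y) := hab
      rw [phiN_mk n hn, phiN_mk n hn] at hab
      have hθ := congrArg (theta F) hab
      rw [map_mul, map_mul, map_pow, theta_eta] at hθ
      have hTn : (LaurentPolynomial.T (-1) : LaurentPolynomial (WittRing F)) ^ n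
          = LaurentPolynomial.T (-(n : ℤ)) := by
        rw [LaurentPolynomial.T_pow]
        norm_num
      rw [hTn] at hθ
      have hT1 : (LaurentPolynomial.T (-(n : ℤ)) : LaurentPolynomial (WittRing F))
          * LaurentPolynomial.T ((n : ℤ)) = 1 := by
        rw [← LaurentPolynomial.T_add]
        norm_num [LaurentPolynomial.T_zero]
      have hxy' : theta F (phi0 F x) = theta F (phi0 F y) := by
        have h2 : theta F (phi0 F x) * (LaurentPolynomial.T (-(n : ℤ))
            * LaurentPolynomial.T ((n : ℤ)))
            = theta F (phi0 F y) * (LaurentPolynomial.T (-(n : ℤ))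
              * LaurentPolynomial.T ((n : ℤ))) := by
          rw [← mul_assoc, ← mul_assoc, hθ]
        rwa [hT1, mul_one, mul_one] at h2
      have hC : (LaurentPolynomial.C (wq F x) : LaurentPolynomial (WittRing F))
          = LaurentPolynomial.C (wq F y) := by
        calc LaurentPolynomial.C (wq F x) = theta F (phi0 F x) :=
              (RingHom.congr_fun (theta_phi0 F) x).symm
          _ = theta F (phi0 F y) := hxy'
          _ = LaurentPolynomial.C (wq F y) := RingHom.congr_fun (theta_phi0 F) y
      exact C_inj F hC
    · intro x
      obtain ⟨g, rfl⟩ := Ideal.Quotient.mk_surjective x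
      show phiN F n hn (wq F g) ∈ KMWcomp F (-(n : ℤ))
      rw [phiN_mk n hn]
      have h := comp_mul (phi0_mem_comp0 g) (eta_pow_mem (F := F) n)
      simpa using h
    · have hle : KMWcomp F (-(n : ℤ)) ≤ AddMonoidHom.range (phiN F n hn) := by
        apply AddSubgroup.closure_le _ |>.mpr
        rintro x ⟨m, r, v, hd, rfl⟩
        have hm : m = r + n := by omega
        subst hm
        refine ⟨wq F ((List.ofFn fun i => gw (v i) - 1).prod), ?_⟩
        rw [phiN_mk n hn, phi0_prod]
        have hcomm : (List.ofFn fun i => mw (v i)).prod * mweta F ^ n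
            = mweta F ^ n * (List.ofFn fun i => mw (v i)).prod :=
          ((commute_eta _).pow_left n).eq.symm
        calc mweta F ^ r * (List.ofFn fun i => mw (v i)).prod * mweta F ^ n
            = mweta F ^ r * ((List.ofFn fun i => mw (v i)).prod * mweta F ^ n) := by
              rw [mul_assoc]
          _ = (mweta F ^ r * mweta F ^ n) * (List.ofFn fun i => mw (v i)).prod := by
              rw [hcomm, mul_assoc]
          _ = mweta F ^ (r + n) * (List.ofFn fun i => mw (v i)).prod := by rw [pow_add]
      intro y hy
      obtain ⟨x, hx⟩ := hle hy
      exact ⟨x, hx⟩
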